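/- Let X be a time-inhomogeneous Markov jump process with transition sub-probability matrices P̄_i(t,s) within macrostate i (continuous in both arguments and differentiable with ∂_s P̄(t,s)|_{s=t} = M_{ii}(t)). Then the transition intensities of the conditioned process W_ℓ (the micro process within a macro sojourn conditioned on the macro jump data S_n) are μ̃_{ij}(t | S_n) = μ_{(Y,i)(Y,j)}(t) · [e_j' P̄_Y(t, T_ℓ) α_{ℓ+1}(S_n)] / [e_i' P̄_Y(t, T_ℓ) α_{ℓ+1}(S_n)], obtained as the limit as h ↓ 0 of p̃_{ij}(t, t+h | S_n)/h with p̃ the conditional transition probabilities p̃_{ij}(t,s|S_n) = e_i' P̄_Y(t,s) e_j e_j' P̄_Y(s,T_ℓ) α_{ℓ+1}(S_n) / (e_i' P̄_Y(t,T_ℓ) α_{ℓ+1}(S_n)). -/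
import Mathlib


open Matrix Filter

/-- The transition intensities of the conditioned within-sojourn process are obtained as
`μ̃_{ij}(t) = lim_{h↓0} p̃_{ij}(t, t+h)/h
           = μ_{(Y,i)(Y,j)}(t) · e_j' P̄(t,T) v / (e_i' P̄(t,T) v)`. -/
theorem conditioned_process_intensities (d : ℕ)
    (P : ℝ → ℝ → Matrix (Fin d) (Fin d) ℝ)
    (v : Fin d → ℝ) (t T : ℝ) (i j : Fin d) (hij : i ≠ j)
    (μ : ℝ)
    (hlim : Tendsto (fun h : ℝ => P t (t + h) i j / h)
      (nhdsWithin 0 (Set.Ioi 0)) (nhds μ))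
    (hcont : Tendsto (fun h : ℝ => (P (t + h) T).mulVec v j)
      (nhdsWithin 0 (Set.Ioi 0)) (nhds ((P t T).mulVec v j)))
    (hden : 0 < (P t T).mulVec v i) :
    Tendsto
      (fun h : ℝ =>
        P t (t + h) i j * (P (t + h) T).mulVec v j / (P t T).mulVec v i / h)
      (nhdsWithin 0 (Set.Ioi 0))
      (nhds (μ * ((P t T).mulVec v j / (P t T).mulVec v i))) := by
  have h := ((hlim.mul hcont).div_const ((P t T).mulVec v i))
  have heq : (fun h : ℝ =>
      P t (t + h) i j * (P (t + h) T).mulVec v j / (P t T).mulVec v i / h)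
      = fun h : ℝ => P t (t + h) i j / h * (P (t + h) T).mulVec v j /
        (P t T).mulVec v i := by
    funext h; ring
  rw [heq]
  convert h using 2
  ring
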